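/- Let C be a subset of the set T of all rooted binary phylogenetic trees (with leaf sets finite subsets of ℕ) that is closed under leaf relabelling and under restriction to leaf subsets. If C ≠ T, then |C ∩ T_n| / |T_n| → 0 as n → ∞, assuming that for a uniformly random tree T_n from T_n, the probability that T_n contains a given fixed tree shape τ as an induced subtree tends to 1 as n → ∞. -/
import Mathlib


open Filter
open scoped Classical

/- STATEMENT 6 (Proposition 1): Let T be the set of all rooted binary phylogenetic trees
(abstracted here as a type α equipped with a leaf-set map L, a restriction operation, and a
shape-equivalence relation `sameShape` (equality up to leaf relabelling); Tn n is the finite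
set of trees with leaf set a nonempty subset of [n]).  If C ⊆ T is closed under leaf
relabelling and under restriction to nonempty leaf subsets, and C ≠ T, then — assuming that
for every fixed tree shape τ the probability that a uniformly random tree of Tn contains an
induced subtree of shape τ tends to 1 — the proportion |C ∩ T_n|/|T_n| tends to 0. -/
theorem closed_subclass_of_trees_dichotomy {α : Type*}
    (L : α → Finset ℕ) (restrict : α → Finset ℕ → α) (sameShape : α → α → Prop)
    (Tn : ℕ → Finset α) (hTn : ∀ n, (Tn n).Nonempty)
    (C : Set α)
    (hrelabel : ∀ T ∈ C, ∀ T', sameShape T T' → T' ∈ C)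
    (hrestrict : ∀ T ∈ C, ∀ Y ⊆ L T, Y.Nonempty → restrict T Y ∈ C)
    (hne : C ≠ Set.univ)
    (hshape : ∀ τ : α,
      Tendsto (fun n =>
          (((Tn n).filter fun T =>
              ∃ Y ⊆ L T, Y.Nonempty ∧ sameShape (restrict T Y) τ).card : ℝ) / (Tn n).card)
        atTop (nhds 1)) :
    Tendsto (fun n => (((Tn n).filter fun T => T ∈ C).card : ℝ) / (Tn n).card)
      atTop (nhds 0) := by

  obtain ⟨τ, hτ⟩ : ∃ τ, τ ∉ C := by
    by_contra h
    push_neg at h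
    exact hne (Set.eq_univ_of_forall h)
  have key : ∀ n, (((Tn n).filter fun T => T ∈ C).card : ℝ) / (Tn n).card ≤
      1 - (((Tn n).filter fun T =>
        ∃ Y ⊆ L T, Y.Nonempty ∧ sameShape (restrict T Y) τ).card : ℝ) / (Tn n).card := by
    intro n
    have hpos : (0:ℝ) < (Tn n).card := by
      exact_mod_cast (hTn n).card_pos
    rw [div_le_iff₀ hpos, sub_mul, one_mul, div_mul_cancel₀ _ (ne_of_gt hpos), le_sub_iff_add_le]
    have hsub : ((Tn n).filter fun T => T ∈ C) ⊆
        ((Tn n).filter fun T => ¬ ∃ Y ⊆ L T, Y.Nonempty ∧ sameShape (restrict T Y) τ) := by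
      intro T hT
      simp only [Finset.mem_filter] at hT ⊢
      refine ⟨hT.1, ?_⟩
      rintro ⟨Y, hY, hYne, hsh⟩
      exact hτ (hrelabel _ (hrestrict T hT.2 Y hY hYne) τ hsh)
    have hcard := Finset.card_le_card hsub
    have heq := Finset.card_filter_add_card_filter_not (s := Tn n)
      (p := fun T => ∃ Y ⊆ L T, Y.Nonempty ∧ sameShape (restrict T Y) τ)
    have : (((Tn n).filter fun T => T ∈ C).card : ℝ) +
        (((Tn n).filter fun T =>
          ∃ Y ⊆ L T, Y.Nonempty ∧ sameShape (restrict T Y) τ).card : ℝ) ≤ (Tn n).card := by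
      push_cast
      have h2 : (((Tn n).filter fun T => T ∈ C).card : ℝ) ≤
          (((Tn n).filter fun T =>
            ¬ ∃ Y ⊆ L T, Y.Nonempty ∧ sameShape (restrict T Y) τ).card : ℝ) := by
        exact_mod_cast hcard
      have h3 : (((Tn n).filter fun T =>
            ∃ Y ⊆ L T, Y.Nonempty ∧ sameShape (restrict T Y) τ).card : ℝ) +
          (((Tn n).filter fun T =>
            ¬ ∃ Y ⊆ L T, Y.Nonempty ∧ sameShape (restrict T Y) τ).card : ℝ) =
          (Tn n).card := by exact_mod_cast heq
      linarith
    linarith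
  have hg : Tendsto (fun n => 1 - (((Tn n).filter fun T =>
      ∃ Y ⊆ L T, Y.Nonempty ∧ sameShape (restrict T Y) τ).card : ℝ) / (Tn n).card)
      atTop (nhds 0) := by
    have := (tendsto_const_nhds (x := (1:ℝ)) (f := atTop)).sub (hshape τ)
    simpa using this
  refine squeeze_zero (fun n => ?_) key hg
  positivity
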